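/- For every real number c with 0 < c ≤ 1/4, the Lebesgue measure (volume) of the set {(r,s,t) ∈ [0,1]³ : Q(r,s,t) ≤ c} equals c − (3c − 1/2)·ln c + (1 − 4c)^{3/2}·artanh(√(1 − 4c)). -/

import Mathlib

open MeasureTheory Real Set

/-- The inverse hyperbolic tangent, `artanh a = (1/2)·ln((1+a)/(1−a))`. -/
noncomputable def artanh (a : ℝ) : ℝ := (1 / 2) * Real.log ((1 + a) / (1 - a))

namespace CdfLeftAux

/-- polynomial antiderivative of `r^2 - r + c` -/
noncomputable def Pp (c r : ℝ) : ℝ := r^3/3 - r^2/2 + c*r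

/-- antiderivative of `r ↦ (r^2-r+c) * log (u - r)` -/
noncomputable def T (c u r : ℝ) : ℝ :=
  (Pp c r - Pp c u) * Real.log (u - r) -
    (r^3/9 + u*r^2/6 + u^2*r/3 - r^2/4 - u*r/2 + c*r)

/-- antiderivative of `r ↦ (r^2-r+c) * log r` -/
noncomputable def Tl (c r : ℝ) : ℝ := Pp c r * Real.log r - (r^3/9 - r^2/4 + c*r)

lemma T_eq (c u : ℝ) : T c u = fun r =>
    -(((r^2 + r*u + u^2)/3 - (r+u)/2 + c) * ((u - r) * Real.log (u - r)))
      - (r^3/9 + u*r^2/6 + u^2*r/3 - r^2/4 - u*r/2 + c*r) := by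
  funext r
  have h : Pp c r - Pp c u = (r - u) * ((r^2 + r*u + u^2)/3 - (r+u)/2 + c) := by
    simp only [Pp]; ring
  simp only [T, h]; ring

lemma T_cont (c u : ℝ) : Continuous (T c u) := by
  rw [T_eq]
  apply Continuous.sub
  · apply Continuous.neg
    apply Continuous.mul (by continuity)
    exact Real.continuous_mul_log.comp (by continuity)
  · continuity

lemma Tl_eq (c : ℝ) : Tl c = fun r =>
    (r^2/3 - r/2 + c) * (r * Real.log r) - (r^3/9 - r^2/4 + c*r) := by
  funext r; simp only [Tl, Pp]; ring

lemma Tl_cont (c : ℝ) : Continuous (Tl c) := by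
  rw [Tl_eq]
  apply Continuous.sub
  · exact Continuous.mul (by continuity) (Real.continuous_mul_log.comp (by continuity))
  · continuity

lemma Pp_hasDeriv (c r : ℝ) : HasDerivAt (Pp c) (r^2 - r + c) r := by
  have h : HasDerivAt (fun r : ℝ => r^3/3 - r^2/2 + c*r)
      ((3*r^2)/3 - (2*r^1)/2 + c*1) r := by
    exact (((hasDerivAt_pow 3 r).div_const 3).sub ((hasDerivAt_pow 2 r).div_const 2)).add
      ((hasDerivAt_id r).const_mul c)
  convert h using 1
  · rfl
  ring

lemma T_hasDeriv (c u r : ℝ) (h : r ≠ u) :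
    HasDerivAt (T c u) ((r^2 - r + c) * Real.log (u - r)) r := by
  have hur : u - r ≠ 0 := fun hh => h (by linarith [sub_eq_zero.mp hh])
  have hlog : HasDerivAt (fun r => Real.log (u - r)) (-(u - r)⁻¹) r := by
    have := (Real.hasDerivAt_log hur).comp r ((hasDerivAt_const r u).sub (hasDerivAt_id r))
    exact this.congr_deriv (by simp)
  have h1 : HasDerivAt (fun r => (Pp c r - Pp c u) * Real.log (u - r))
      ((r^2 - r + c) * Real.log (u - r) + (Pp c r - Pp c u) * (-(u - r)⁻¹)) r :=
    (((Pp_hasDeriv c r).sub_const (Pp c u))).mul hlog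
  have h2 : HasDerivAt (fun r : ℝ => r^3/9 + u*r^2/6 + u^2*r/3 - r^2/4 - u*r/2 + c*r)
      ((3*r^2)/9 + u*(2*r^1)/6 + u^2*1/3 - (2*r^1)/4 - u*1/2 + c*1) r := by
    exact ((((((hasDerivAt_pow 3 r).div_const 9).add
      (((hasDerivAt_pow 2 r).const_mul u).div_const 6)).add
      (((hasDerivAt_id r).const_mul (u^2)).div_const 3)).sub
      ((hasDerivAt_pow 2 r).div_const 4)).sub
      (((hasDerivAt_id r).const_mul u).div_const 2)).add ((hasDerivAt_id r).const_mul c)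
  have := h1.sub h2
  refine this.congr_deriv ?_
  have hP : Pp c r - Pp c u = (r - u) * ((r^2 + r*u + u^2)/3 - (r+u)/2 + c) := by
    simp only [Pp]; ring
  rw [hP]
  field_simp
  ring

lemma Tl_hasDeriv (c r : ℝ) (h : r ≠ 0) :
    HasDerivAt (Tl c) ((r^2 - r + c) * Real.log r) r := by
  have h1 : HasDerivAt (fun r => Pp c r * Real.log r)
      ((r^2 - r + c) * Real.log r + Pp c r * r⁻¹) r :=
    (Pp_hasDeriv c r).mul (Real.hasDerivAt_log h)
  have h2 : HasDerivAt (fun r : ℝ => r^3/9 - r^2/4 + c*r)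
      ((3*r^2)/9 - (2*r^1)/4 + c*1) r :=
    (((hasDerivAt_pow 3 r).div_const 9).sub ((hasDerivAt_pow 2 r).div_const 4)).add
      ((hasDerivAt_id r).const_mul c)
  have := h1.sub h2
  refine this.congr_deriv ?_
  simp only [Pp]
  field_simp
  ring

noncomputable def FA (c al be r : ℝ) : ℝ := c*r + 2*T c 1 r - T c al r - T c be r
noncomputable def FB (c al be r : ℝ) : ℝ := FA c al be r - T c 1 r + Tl c r

lemma final_algebra (c d al be : ℝ) (hc0 : 0 < c) (hd0 : 0 ≤ d) (hd2 : d^2 = 1 - 4*c)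
    (hal : al = (1-d)/2) (hbe : be = (1+d)/2) :
    2*((FA c al be al - FA c al be 0) + (FB c al be be - FB c al be al)
      + (FA c al be (1-c) - FA c al be be) + c^2/2)
    = c - (3*c - 1/2)*Real.log c + (1-4*c)*d * ((1/2) * (Real.log be - Real.log al)) := by
  have halbe : al + be = 1 := by rw [hal, hbe]; ring
  have hd1 : d < 1 := by nlinarith
  have hal0 : 0 < al := by rw [hal]; linarith
  have hbe0 : 0 < be := by rw [hbe]; linarith
  have hc_eq : c = al * be := by rw [hal, hbe]; linarith [hd2]
  have hcc : c = (1 - d^2)/4 := by linarith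
  have e1 : (1:ℝ) - al = be := by linarith
  have e2 : (1:ℝ) - be = al := by linarith
  have e3 : (1:ℝ) - (1 - c) = c := by ring
  have e4 : al - al = (0:ℝ) := by ring
  have e5 : be - be = (0:ℝ) := by ring
  have e6 : al - be = -(be - al) := by ring
  have e7 : al - (1 - c) = -(be^2) := by linear_combination hc_eq + (1+be)*halbe
  have e8 : be - (1 - c) = -(al^2) := by linear_combination hc_eq + (1+al)*halbe
  have e9 : (1:ℝ) - (0:ℝ) = 1 := by ring
  have e10 : al - 0 = al := by ring
  have e11 : be - 0 = be := by ring
  simp only [FA, FB, T, Tl, Pp, e1, e2, e3, e4, e5, e6, e7, e8, e9, e10, e11,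
    Real.log_neg_eq_log, Real.log_zero, Real.log_one, Real.log_pow]
  rw [show Real.log c = Real.log al + Real.log be by
    rw [hc_eq, Real.log_mul (ne_of_gt hal0) (ne_of_gt hbe0)]]
  rw [hcc, hal, hbe]
  ring
lemma ofReal_max_zero (x : ℝ) : ENNReal.ofReal (max 0 x) = ENNReal.ofReal x := by
  rcases le_total 0 x with h | h
  · rw [max_eq_right h]
  · rw [max_eq_left h, ENNReal.ofReal_of_nonpos h, ENNReal.ofReal_zero]

noncomputable def X (c r s : ℝ) : ℝ := max 0 (min 1 ((c - r*s)/(1-r-s)))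

noncomputable def Lam (c r s : ℝ) : ℝ := if s ≤ 1 - r then X c r s else X c (1-r) (1-s)

noncomputable def fc (c r : ℝ) : ℝ :=
  if 1 - c ≤ r then 1 - r
  else if r^2 - r + c < 0 then c + (r^2-r+c)*Real.log (r*(1-r)/(r - r^2 - c))
  else c + (r^2-r+c)*Real.log ((1-r)^2/(r^2-r+c))

/-- volume of the t-slice -/
lemma slice_vol (c r s : ℝ) (hr : r ∈ Ioo (0:ℝ) 1) (hs : s ∈ Icc (0:ℝ) 1)
    (hne : s ≠ 1 - r) :
    volume {t : ℝ | t ∈ Icc (0:ℝ) 1 ∧ r*s*t + (1-r)*(1-s)*(1-t) ≤ c} =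
      ENNReal.ofReal (Lam c r s) := by
  rcases lt_or_gt_of_ne hne with hlt | hgt
  · -- s < 1 - r
    have hd : (0:ℝ) < 1 - r - s := by linarith
    have hcond : ∀ t : ℝ, (r*s*t + (1-r)*(1-s)*(1-t) ≤ c) ↔
        ((1-r)*(1-s) - c)/(1-r-s) ≤ t := by
      intro t
      rw [div_le_iff₀ hd]
      constructor <;> intro h <;> nlinarith
    have hset : {t : ℝ | t ∈ Icc (0:ℝ) 1 ∧ r*s*t + (1-r)*(1-s)*(1-t) ≤ c} =
        Icc (max 0 (((1-r)*(1-s) - c)/(1-r-s))) 1 := by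
      ext t
      simp only [Set.mem_setOf_eq, Set.mem_Icc, max_le_iff, hcond]
      tauto
    rw [hset, Real.volume_Icc]
    have hLam : Lam c r s = X c r s := if_pos (le_of_lt hlt)
    have hrat : 1 - ((1-r)*(1-s) - c)/(1-r-s) = (c - r*s)/(1-r-s) := by
      field_simp
      ring
    rw [hLam, X, ofReal_max_zero, ← hrat]
    congr 1
    rcases le_total (((1-r)*(1-s) - c)/(1-r-s)) 0 with h | h
    · rw [max_eq_left h, min_eq_left (by linarith)]
      norm_num
    · rw [max_eq_right h, min_eq_right (by linarith)]
  · -- s > 1 - r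
    have hd : (0:ℝ) < r + s - 1 := by linarith
    have hcond : ∀ t : ℝ, (r*s*t + (1-r)*(1-s)*(1-t) ≤ c) ↔
        t ≤ (c - (1-r)*(1-s))/(r+s-1) := by
      intro t
      rw [le_div_iff₀ hd]
      constructor <;> intro h <;> nlinarith
    have hset : {t : ℝ | t ∈ Icc (0:ℝ) 1 ∧ r*s*t + (1-r)*(1-s)*(1-t) ≤ c} =
        Icc 0 (min 1 ((c - (1-r)*(1-s))/(r+s-1))) := by
      ext t
      simp only [Set.mem_setOf_eq, Set.mem_Icc, le_min_iff, hcond]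
      tauto
    rw [hset, Real.volume_Icc]
    have hLam : Lam c r s = X c (1-r) (1-s) := if_neg (by linarith)
    have harg : (c - (1-r)*(1-s))/(1-(1-r)-(1-s)) = (c - (1-r)*(1-s))/(r+s-1) := by
      ring_nf
    rw [hLam, X, harg, ofReal_max_zero]
    congr 1
    ring

/-- integral via a continuous function agreeing on the open interval -/
lemma integral_eqOn_Ioo {f g : ℝ → ℝ} {a b : ℝ} (hab : a ≤ b)
    (hg : ContinuousOn g (Icc a b)) (h : EqOn f g (Ioo a b)) :
    IntervalIntegrable f volume a b ∧ ∫ x in a..b, f x = ∫ x in a..b, g x := by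
  have hgi : IntervalIntegrable g volume a b :=
    ContinuousOn.intervalIntegrable (by rwa [uIcc_of_le hab])
  have hb : ∀ᵐ x : ℝ, x ≠ b := by
    refine ae_iff.mpr ?_
    have : {x : ℝ | ¬ x ≠ b} = {b} := by ext; simp
    rw [this]
    exact volume_singleton
  have hae : f =ᵐ[volume.restrict (Ioc a b)] g := by
    rw [Filter.EventuallyEq, ae_restrict_iff' measurableSet_Ioc]
    filter_upwards [hb] with x hx hxm
    exact h ⟨hxm.1, lt_of_le_of_ne hxm.2 hx⟩
  constructor
  · refine ⟨(hgi.1).congr hae.symm, ?_⟩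
    rw [Ioc_eq_empty (not_lt.mpr hab)]
    exact integrableOn_empty
  · rw [intervalIntegral.integral_of_le hab, intervalIntegral.integral_of_le hab]
    exact integral_congr_ae hae

lemma ratio_FTC (c r S : ℝ) (hS : 0 ≤ S) (hden : 0 < 1 - r - S) :
    ∫ s in (0:ℝ)..S, (c - r*s)/(1-r-s) =
      r*S - (r^2-r+c)*Real.log (1-r-S) + (r^2-r+c)*Real.log (1-r) := by
  have key : ∀ x ∈ uIcc (0:ℝ) S, HasDerivAt (fun s => r*s - (r^2-r+c)*Real.log (1-r-s))
      ((c - r*x)/(1-r-x)) x := by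
    intro x hx
    rw [uIcc_of_le hS] at hx
    obtain ⟨hx0, hxS⟩ := hx
    have hd : 0 < 1 - r - x := by linarith
    have hlog : HasDerivAt (fun s : ℝ => Real.log (1-r-s)) (-(1-r-x)⁻¹) x := by
      have := (Real.hasDerivAt_log (ne_of_gt hd)).comp x
        ((hasDerivAt_const x (1-r)).sub (hasDerivAt_id x))
      exact this.congr_deriv (by simp)
    have h2 := ((hasDerivAt_id x).const_mul r).sub (hlog.const_mul (r^2-r+c))
    refine h2.congr_deriv ?_
    field_simp
    ring
  have hint : IntervalIntegrable (fun s => (c - r*s)/(1-r-s)) volume 0 S := by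
    apply ContinuousOn.intervalIntegrable
    apply ContinuousOn.div (by fun_prop) (by fun_prop)
    intro x hx
    rw [uIcc_of_le hS] at hx
    obtain ⟨hx0, hxS⟩ := hx
    intro hzero
    nlinarith
  have := intervalIntegral.integral_eq_sub_of_hasDerivAt key hint
  rw [this]
  norm_num

lemma f0_eq (c r : ℝ) (hc0 : 0 < c) (hr : r ∈ Ioo (0:ℝ) 1)
    (hq : r^2 - r + c ≠ 0) (hrc : r ≠ 1 - c) :
    IntervalIntegrable (X c r) volume 0 (1-r) ∧ ∫ s in (0:ℝ)..(1-r), X c r s = fc c r := by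
  obtain ⟨hr0, hr1⟩ := hr
  rcases lt_or_gt_of_ne hrc with hlt | hgt
  · -- r < 1 - c
    rcases lt_trichotomy (r^2 - r + c) 0 with hqneg | hq0 | hqpos
    · -- case A : q < 0, split at c/r
      have hs2pos : 0 < c/r := div_pos hc0 hr0
      have hs2lt : c/r < 1 - r := by rw [div_lt_iff₀ hr0]; nlinarith
      have hca : r * (c/r) = c := by field_simp
      have hpart1 : EqOn (X c r) (fun s => (c - r*s)/(1-r-s)) (Ioo 0 (c/r)) := by
        intro s hs
        obtain ⟨hs0, hsu⟩ := hs
        have hd : (0:ℝ) < 1-r-s := by linarith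
        have hnum : 0 ≤ c - r*s := by nlinarith [mul_lt_mul_of_pos_left hsu hr0]
        have hle1 : (c - r*s)/(1-r-s) ≤ 1 := by
          rw [div_le_one hd]
          nlinarith [mul_pos (show (0:ℝ) < 1 - r by linarith)
            (show (0:ℝ) < c/r - s by linarith)]
        simp only [X]
        rw [min_eq_right hle1, max_eq_right (div_nonneg hnum hd.le)]
      have hcont1 : ContinuousOn (fun s => (c - r*s)/(1-r-s)) (Icc 0 (c/r)) := by
        apply ContinuousOn.div (by fun_prop) (by fun_prop)
        intro x hx
        obtain ⟨hx0, hxu⟩ := hx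
        intro h0; nlinarith
      obtain ⟨hi1, he1⟩ := integral_eqOn_Ioo hs2pos.le hcont1 hpart1
      have hpart2 : EqOn (X c r) (fun _ => (0:ℝ)) (Ioo (c/r) (1-r)) := by
        intro s hs
        obtain ⟨hs0, hsu⟩ := hs
        have hd : (0:ℝ) < 1-r-s := by linarith
        have hnum : c - r*s < 0 := by nlinarith [mul_lt_mul_of_pos_left hs0 hr0]
        have hratneg : (c - r*s)/(1-r-s) < 0 := div_neg_of_neg_of_pos hnum hd
        simp only [X]
        rw [min_eq_right (by linarith), max_eq_left hratneg.le]
      obtain ⟨hi2, he2⟩ := integral_eqOn_Ioo hs2lt.le continuousOn_const hpart2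
      refine ⟨hi1.trans hi2, ?_⟩
      rw [← intervalIntegral.integral_add_adjacent_intervals hi1 hi2, he1, he2,
        ratio_FTC c r (c/r) hs2pos.le (by linarith)]
      have hfc : fc c r = c + (r^2-r+c)*Real.log (r*(1-r)/(r - r^2 - c)) := by
        unfold fc
        rw [if_neg (by linarith), if_pos hqneg]
      have h2 : 1 - r - c/r = (r - r^2 - c)/r := by field_simp
      have hnum0 : (0:ℝ) < r - r^2 - c := by nlinarith
      have h1rpos : (0:ℝ) < 1 - r := by linarith
      rw [hfc, hca, h2, Real.log_div (ne_of_gt hnum0) (ne_of_gt hr0),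
        Real.log_div (ne_of_gt (mul_pos hr0 h1rpos)) (ne_of_gt hnum0),
        Real.log_mul (ne_of_gt hr0) (ne_of_gt h1rpos)]
      simp only [intervalIntegral.integral_zero]
      ring
    · exact absurd hq0 hq
    · -- case B : q > 0, split at s₁ = (1-r-c)/(1-r)
      set s₁ := (1-r-c)/(1-r) with hs₁def
      have h1r : (0:ℝ) < 1 - r := by linarith
      have hs1pos : 0 < s₁ := div_pos (by linarith) h1r
      have hs1lt : s₁ < 1 - r := by rw [div_lt_iff₀ h1r]; nlinarith
      have hden : 1 - r - s₁ = (r^2-r+c)/(1-r) := by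
        rw [hs₁def]; field_simp; ring
      have hdenpos : 0 < 1 - r - s₁ := by
        rw [hden]; positivity
      have hkey : (1-r)*(1-s₁) = c := by
        rw [hs₁def]; field_simp; ring
      have hpart1 : EqOn (X c r) (fun s => (c - r*s)/(1-r-s)) (Ioo 0 s₁) := by
        intro s hs
        obtain ⟨hs0, hsu⟩ := hs
        have hd : (0:ℝ) < 1-r-s := by linarith
        have hprod : c < (1-r)*(1-s) := by
          rw [← hkey]
          exact mul_lt_mul_of_pos_left (by linarith) h1r
        have hle1 : (c - r*s)/(1-r-s) ≤ 1 := by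
          rw [div_le_one hd]; nlinarith
        have hrs1 : r * s₁ ≤ c := by
          rw [hs₁def, ← mul_div_assoc, div_le_iff₀ h1r]; nlinarith
        have hnum : 0 ≤ c - r*s := by nlinarith [mul_lt_mul_of_pos_left hsu hr0]
        simp only [X]
        rw [min_eq_right hle1, max_eq_right (div_nonneg hnum hd.le)]
      have hcont1 : ContinuousOn (fun s => (c - r*s)/(1-r-s)) (Icc 0 s₁) := by
        apply ContinuousOn.div (by fun_prop) (by fun_prop)
        intro x hx
        obtain ⟨hx0, hxu⟩ := hx
        intro h0; nlinarith
      obtain ⟨hi1, he1⟩ := integral_eqOn_Ioo hs1pos.le hcont1 hpart1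
      have hpart2 : EqOn (X c r) (fun _ => (1:ℝ)) (Ioo s₁ (1-r)) := by
        intro s hs
        obtain ⟨hs0, hsu⟩ := hs
        have hd : (0:ℝ) < 1-r-s := by linarith
        have hprod : (1-r)*(1-s) < c := by
          rw [← hkey]
          exact mul_lt_mul_of_pos_left (by linarith) h1r
        have hge1 : (1:ℝ) ≤ (c - r*s)/(1-r-s) := by
          rw [le_div_iff₀ hd]; nlinarith
        simp only [X]
        rw [min_eq_left hge1, max_eq_right zero_le_one]
      obtain ⟨hi2, he2⟩ := integral_eqOn_Ioo hs1lt.le continuousOn_const hpart2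
      refine ⟨hi1.trans hi2, ?_⟩
      rw [← intervalIntegral.integral_add_adjacent_intervals hi1 hi2, he1, he2,
        ratio_FTC c r s₁ hs1pos.le hdenpos]
      have hfc : fc c r = c + (r^2-r+c)*Real.log ((1-r)^2/(r^2-r+c)) := by
        unfold fc
        rw [if_neg (by linarith), if_neg (by linarith)]
      rw [hfc, hden,
        show Real.log ((r^2-r+c)/(1-r)) = Real.log (r^2-r+c) - Real.log (1-r) from
          Real.log_div (ne_of_gt hqpos) (ne_of_gt h1r),
        show Real.log ((1-r)^2/(r^2-r+c)) = Real.log ((1-r)^2) - Real.log (r^2-r+c) from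
          Real.log_div (ne_of_gt (pow_pos h1r 2)) (ne_of_gt hqpos),
        Real.log_pow]
      simp only [intervalIntegral.integral_const, smul_eq_mul, mul_one]
      have hs₁c : r * s₁ + (1 - r - s₁) = c := by
        rw [hs₁def]; field_simp; ring
      push_cast
      linear_combination hs₁c
  · -- case C : 1 - c < r
    have hpart : EqOn (X c r) (fun _ => (1:ℝ)) (Ioo 0 (1-r)) := by
      intro s hs
      obtain ⟨hs0, hsu⟩ := hs
      have hd : (0:ℝ) < 1-r-s := by linarith
      have hge1 : (1:ℝ) ≤ (c - r*s)/(1-r-s) := by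
        rw [le_div_iff₀ hd]
        nlinarith [mul_nonneg (show (0:ℝ) ≤ 1-r by linarith) hs0.le]
      simp only [X]
      rw [min_eq_left hge1, max_eq_right zero_le_one]
    obtain ⟨hint, heq⟩ := integral_eqOn_Ioo (by linarith) continuousOn_const hpart
    refine ⟨hint, ?_⟩
    rw [heq]
    have hfc : fc c r = 1 - r := by unfold fc; rw [if_pos hgt.le]
    rw [hfc]
    simp

def Sset (c : ℝ) : Set (ℝ × ℝ × ℝ) :=
  {p : ℝ × ℝ × ℝ | p ∈ Set.Icc (0:ℝ) 1 ×ˢ Set.Icc (0:ℝ) 1 ×ˢ Set.Icc (0:ℝ) 1 ∧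
      p.1 * p.2.1 * p.2.2 + (1 - p.1) * (1 - p.2.1) * (1 - p.2.2) ≤ c}

lemma Sset_measurable (c : ℝ) : MeasurableSet (Sset c) := by
  have h : Sset c = (Set.Icc (0:ℝ) 1 ×ˢ Set.Icc (0:ℝ) 1 ×ˢ Set.Icc (0:ℝ) 1) ∩
      {p : ℝ × ℝ × ℝ | p.1 * p.2.1 * p.2.2 + (1 - p.1) * (1 - p.2.1) * (1 - p.2.2) ≤ c} := rfl
  rw [h]
  exact (measurableSet_Icc.prod (measurableSet_Icc.prod measurableSet_Icc)).inter
    (measurableSet_le (by fun_prop) measurable_const)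

lemma X_nonneg (c r s : ℝ) : 0 ≤ X c r s := le_max_left _ _
lemma X_le_one (c r s : ℝ) : X c r s ≤ 1 := max_le zero_le_one (min_le_left _ _)

lemma Lam_nonneg (c r s : ℝ) : 0 ≤ Lam c r s := by
  unfold Lam; split_ifs <;> exact X_nonneg _ _ _
lemma Lam_le_one (c r s : ℝ) : Lam c r s ≤ 1 := by
  unfold Lam; split_ifs <;> exact X_le_one _ _ _

lemma Lam_meas (c r : ℝ) : Measurable (Lam c r) := by
  unfold Lam X
  exact Measurable.ite (measurableSet_le measurable_id measurable_const)
    (by fun_prop) (by fun_prop)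

lemma X_zero_den (c a b : ℝ) (h : 1-a-b = 0) : X c a b = 0 := by
  rw [X, h, div_zero]
  norm_num

lemma intervalIntegrable_congr {f g : ℝ → ℝ} {a b : ℝ} (hab : a ≤ b)
    (h : EqOn f g (Icc a b)) (hf : IntervalIntegrable f volume a b) :
    IntervalIntegrable g volume a b :=
  ⟨hf.1.congr_fun (h.mono Ioc_subset_Icc_self) measurableSet_Ioc,
    by rw [Ioc_eq_empty (not_lt.mpr hab)]; exact integrableOn_empty⟩

lemma Gr_eq (c r : ℝ) (hc0 : 0 < c) (hr : r ∈ Ioo (0:ℝ) 1)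
    (hq : r^2 - r + c ≠ 0) (hr1c : r ≠ 1 - c) (hrc : r ≠ c) :
    ((volume : Measure (ℝ × ℝ)) (Prod.mk r ⁻¹' Sset c)).toReal = fc c r + fc c (1-r) := by
  obtain ⟨hr0, hr1⟩ := hr
  have hrIcc : r ∈ Icc (0:ℝ) 1 := ⟨hr0.le, hr1.le⟩
  have hmS : MeasurableSet (Prod.mk r ⁻¹' Sset c) :=
    (Sset_measurable c).preimage measurable_prodMk_left
  have hset : ∀ s : ℝ, Prod.mk s ⁻¹' (Prod.mk r ⁻¹' Sset c) =
      if s ∈ Icc (0:ℝ) 1 then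
        {t : ℝ | t ∈ Icc (0:ℝ) 1 ∧ r*s*t + (1-r)*(1-s)*(1-t) ≤ c} else ∅ := by
    intro s
    split_ifs with hs
    · ext t
      constructor
      · exact fun h => ⟨h.1.2.2, h.2⟩
      · exact fun h => ⟨⟨hrIcc, hs, h.1⟩, h.2⟩
    · rw [Set.eq_empty_iff_forall_notMem]
      exact fun t ht => hs ht.1.2.1
  rw [MeasureTheory.Measure.volume_eq_prod, Measure.prod_apply hmS]
  have hfin : volume ({0, 1, 1-r} : Set ℝ) = 0 :=
    (Set.toFinite _).measure_zero volume
  have hae : ∀ᵐ s : ℝ, volume (Prod.mk s ⁻¹' (Prod.mk r ⁻¹' Sset c)) =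
      ENNReal.ofReal ((Ioo (0:ℝ) 1).indicator (Lam c r) s) := by
    filter_upwards [measure_eq_zero_iff_ae_notMem.mp hfin] with s hsE
    simp only [Set.mem_insert_iff, Set.mem_singleton_iff, not_or] at hsE
    obtain ⟨hs0, hs1, hsr⟩ := hsE
    rw [hset s]
    by_cases hs : s ∈ Icc (0:ℝ) 1
    · rw [if_pos hs, slice_vol c r s ⟨hr0, hr1⟩ hs hsr]
      have hsIoo : s ∈ Ioo (0:ℝ) 1 :=
        ⟨lt_of_le_of_ne hs.1 (Ne.symm hs0), lt_of_le_of_ne hs.2 hs1⟩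
      rw [Set.indicator_of_mem hsIoo]
    · rw [if_neg hs, Set.indicator_of_notMem (fun h => hs (Ioo_subset_Icc_self h)),
        measure_empty, ENNReal.ofReal_zero]
  rw [lintegral_congr_ae hae]
  have hnn : ∀ s, 0 ≤ (Ioo (0:ℝ) 1).indicator (Lam c r) s :=
    fun s => Set.indicator_nonneg (fun t _ => Lam_nonneg c r t) s
  have hint : Integrable ((Ioo (0:ℝ) 1).indicator (Lam c r)) volume := by
    rw [integrable_indicator_iff measurableSet_Ioo]
    refine Integrable.mono' (g := fun _ => (1:ℝ)) ?_ ((Lam_meas c r).aestronglyMeasurable.restrict) ?_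
    · exact (integrableOn_const_iff (C := (1:ℝ))).mpr (Or.inr (by rw [Real.volume_Ioo]; exact ENNReal.ofReal_lt_top))
    · refine ae_of_all _ fun s => ?_
      rw [Real.norm_eq_abs, abs_of_nonneg (Lam_nonneg c r s)]
      exact Lam_le_one c r s
  rw [← ofReal_integral_eq_lintegral_ofReal hint (ae_of_all _ hnn),
    ENNReal.toReal_ofReal (integral_nonneg hnn),
    integral_indicator measurableSet_Ioo, ← integral_Ioc_eq_integral_Ioo,
    ← intervalIntegral.integral_of_le zero_le_one]
  -- now : ∫ s in 0..1, Lam c r s = fc c r + fc c (1-r)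
  obtain ⟨hiX, hvX⟩ := f0_eq c r hc0 ⟨hr0, hr1⟩ hq hr1c
  have hq' : (1-r)^2 - (1-r) + c ≠ 0 := by
    rw [show (1-r)^2 - (1-r) + c = r^2 - r + c from by ring]; exact hq
  obtain ⟨hiX', hvX'⟩ := f0_eq c (1-r) hc0 ⟨by linarith, by linarith⟩ hq'
    (fun h => hrc (by linarith))
  rw [show (1:ℝ)-(1-r) = r from by ring] at hiX' hvX'
  have he1 : EqOn (Lam c r) (X c r) (uIcc (0:ℝ) (1-r)) := by
    intro s hs
    rw [uIcc_of_le (by linarith)] at hs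
    exact if_pos hs.2
  have hi1 : IntervalIntegrable (Lam c r) volume 0 (1-r) :=
    intervalIntegrable_congr (by linarith) (fun s hs => (he1 (by rwa [uIcc_of_le (by linarith)])).symm) hiX
  have hv1 : ∫ s in (0:ℝ)..(1-r), Lam c r s = fc c r := by
    rw [intervalIntegral.integral_congr he1, hvX]
  have he2 : EqOn (Lam c r) (fun s => X c (1-r) (1-s)) (uIcc (1-r) 1) := by
    intro s hs
    rw [uIcc_of_le (by linarith)] at hs
    rcases eq_or_lt_of_le hs.1 with heq | hlt
    · rw [← heq]
      show Lam c r (1-r) = X c (1-r) (1-(1-r))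
      rw [show Lam c r (1-r) = X c r (1-r) from if_pos le_rfl,
        X_zero_den c r (1-r) (by ring), X_zero_den c (1-r) (1-(1-r)) (by ring)]
    · exact if_neg (not_le.mpr hlt)
  have hiY : IntervalIntegrable (fun s => X c (1-r) (1-s)) volume (1-r) 1 := by
    have h := (hiX'.comp_sub_left 1).symm
    rw [show (1:ℝ)-0 = 1 from by ring] at h
    exact h
  have hi2 : IntervalIntegrable (Lam c r) volume (1-r) 1 :=
    intervalIntegrable_congr (by linarith)
      (fun s hs => (he2 (by rwa [uIcc_of_le (by linarith)])).symm) hiY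
  have hv2 : ∫ s in (1-r)..1, Lam c r s = fc c (1-r) := by
    rw [intervalIntegral.integral_congr he2,
      intervalIntegral.integral_comp_sub_left (X c (1-r)) 1,
      show (1:ℝ)-1 = 0 from by ring, show (1:ℝ)-(1-r) = r from by ring, hvX']
  rw [← intervalIntegral.integral_add_adjacent_intervals hi1 hi2, hv1, hv2]

noncomputable def phiA (c al be r : ℝ) : ℝ :=
  c + 2*(r^2-r+c)*Real.log (1-r) - (be-r)*((al-r)*Real.log (al-r))
    - (al-r)*((be-r)*Real.log (be-r))
noncomputable def phiB (c al be r : ℝ) : ℝ :=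
  phiA c al be r - (r^2-r+c)*Real.log (1-r) + (r^2-r+c)*Real.log r

lemma phiA_contOn (c al be a b : ℝ) (hb : b < 1) :
    ContinuousOn (phiA c al be) (Icc a b) := by
  unfold phiA
  have hml : ∀ u : ℝ, Continuous (fun r : ℝ => (u-r) * Real.log (u-r)) := fun u =>
    Real.continuous_mul_log.comp (continuous_const.sub continuous_id)
  refine ((ContinuousOn.add continuousOn_const ?_).sub
    (((continuous_const.sub continuous_id).continuousOn).mul (hml al).continuousOn)).sub
    (((continuous_const.sub continuous_id).continuousOn).mul (hml be).continuousOn)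
  refine ContinuousOn.mul (by fun_prop) (ContinuousOn.log (by fun_prop) ?_)
  intro x hx h0
  have h2 := hx.2
  have h3 := sub_eq_zero.mp h0
  linarith

lemma phiB_contOn (c al be a b : ℝ) (hb : b < 1) (ha : 0 < a) :
    ContinuousOn (phiB c al be) (Icc a b) := by
  unfold phiB
  refine (ContinuousOn.sub (phiA_contOn c al be a b hb) ?_).add ?_
  · refine ContinuousOn.mul (by fun_prop) (ContinuousOn.log (by fun_prop) ?_)
    intro x hx h0
    have h2 := hx.2
    have h3 := sub_eq_zero.mp h0
    linarith
  · refine ContinuousOn.mul (by fun_prop) (ContinuousOn.log (by fun_prop) ?_)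
    intro x hx
    exact ne_of_gt (lt_of_lt_of_le ha hx.1)

lemma FA_deriv (c al be r : ℝ) (hfac : ∀ x : ℝ, x^2 - x + c = (x-al)*(x-be))
    (h1 : r ≠ 1) (ha : r ≠ al) (hb : r ≠ be) :
    HasDerivAt (FA c al be) (phiA c al be r) r := by
  have h := ((((hasDerivAt_id r).const_mul c).add ((T_hasDeriv c 1 r h1).const_mul 2)).sub
    (T_hasDeriv c al r ha)).sub (T_hasDeriv c be r hb)
  have hFA : FA c al be = fun r => c*r + 2*T c 1 r - T c al r - T c be r := rfl
  rw [hFA]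
  refine h.congr_deriv ?_
  symm
  have hf := hfac r
  unfold phiA
  linear_combination (Real.log (al - r) + Real.log (be - r)) * hf

lemma FB_deriv (c al be r : ℝ) (hfac : ∀ x : ℝ, x^2 - x + c = (x-al)*(x-be))
    (h1 : r ≠ 1) (ha : r ≠ al) (hb : r ≠ be) (h0 : r ≠ 0) :
    HasDerivAt (FB c al be) (phiB c al be r) r := by
  have h := ((FA_deriv c al be r hfac h1 ha hb).sub (T_hasDeriv c 1 r h1)).add
    (Tl_hasDeriv c r h0)
  have hFB : FB c al be = fun r => FA c al be r - T c 1 r + Tl c r := rfl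
  rw [hFB]
  exact h



lemma fc_int (c d al be : ℝ) (hc0 : 0 < c) (hc : c ≤ 1/4) (hd0 : 0 ≤ d)
    (hd2 : d^2 = 1 - 4*c) (hal : al = (1-d)/2) (hbe : be = (1+d)/2) :
    IntervalIntegrable (fc c) volume 0 1 ∧
    ∫ r in (0:ℝ)..1, fc c r =
      (FA c al be al - FA c al be 0) + (FB c al be be - FB c al be al)
        + (FA c al be (1-c) - FA c al be be) + c^2/2 := by
  have hd1 : d < 1 := by nlinarith
  have hal0 : 0 < al := by rw [hal]; linarith
  have hbe0 : 0 < be := by rw [hbe]; linarith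
  have hbe1 : be < 1 := by rw [hbe]; linarith
  have halbe : al + be = 1 := by rw [hal, hbe]; ring
  have hab : al ≤ be := by rw [hal, hbe]; linarith
  have hc_eq : c = al * be := by rw [hal, hbe]; linarith [hd2]
  have hdlt : d < 1 - 2*c := by nlinarith [mul_pos hc0 hc0]
  have hbelt : be < 1 - c := by rw [hbe]; linarith
  have hallt : al < 1 - c := lt_of_le_of_lt hab hbelt
  have halhalf : al ≤ 1/2 := by rw [hal]; linarith
  have h1c1 : 1 - c < 1 := by linarith
  have hfac : ∀ x : ℝ, x^2 - x + c = (x-al)*(x-be) := by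
    intro x; rw [hal, hbe]; linear_combination hd2 / 4
  have hqal : al^2 - al + c = 0 := by rw [hfac al]; ring
  have hqbe : be^2 - be + c = 0 := by rw [hfac be]; ring
  have hbe_eq : be = 1 - al := by linarith
  -- continuity of FA, FB
  have hFAc : Continuous (FA c al be) := by
    unfold FA
    exact (((continuous_const.mul continuous_id).add (continuous_const.mul (T_cont c 1))).sub
      (T_cont c al)).sub (T_cont c be)
  have hFBc : Continuous (FB c al be) := by
    unfold FB
    exact ((hFAc.sub (T_cont c 1)).add (Tl_cont c))
  -- piece 1 : EqOn fc phiA on [0, al]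
  have heA1 : EqOn (fc c) (phiA c al be) (Icc 0 al) := by
    intro r hr
    obtain ⟨hr0, hral⟩ := hr
    rcases eq_or_lt_of_le hral with heq | hlt
    · rw [heq]
      have h1 : fc c al = c := by
        unfold fc
        rw [if_neg (by linarith), if_neg (by rw [hqal]; exact lt_irrefl 0), hqal]
        ring
      have h2 : phiA c al be al = c := by
        unfold phiA
        rw [hqal]
        ring
      rw [h1, h2]
    · have hq : 0 < r^2 - r + c := by
        rw [hfac r]; exact mul_pos_of_neg_of_neg (by linarith) (by linarith)
      have h1r : 0 < 1 - r := by linarith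
      have hfcr : fc c r = c + (r^2-r+c)*Real.log ((1-r)^2/(r^2-r+c)) := by
        unfold fc
        rw [if_neg (by linarith), if_neg (not_lt.mpr hq.le)]
      rw [hfcr]
      have hlq : Real.log (r^2-r+c) = Real.log (al-r) + Real.log (be-r) := by
        rw [show r^2-r+c = (al-r)*(be-r) from by linear_combination hfac r]
        exact Real.log_mul (ne_of_gt (by linarith)) (ne_of_gt (by linarith))
      rw [Real.log_div (pow_ne_zero 2 (ne_of_gt h1r)) (ne_of_gt hq), Real.log_pow, hlq]
      unfold phiA
      push_cast
      linear_combination (-(Real.log (al-r)) - Real.log (be-r)) * hfac r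
  -- piece 2 : EqOn fc phiB on [al, be]
  have heB : EqOn (fc c) (phiB c al be) (Icc al be) := by
    intro r hr
    obtain ⟨hral, hrbe⟩ := hr
    have hfc_c : ∀ x : ℝ, x^2 - x + c = 0 → 0 < x → x < 1 - c → fc c x = c := by
      intro x hx hx0 hx1
      unfold fc
      rw [if_neg (by linarith), if_neg (by rw [hx]; exact lt_irrefl 0), hx]
      ring
    rcases eq_or_lt_of_le hral with heqa | hlta
    · rw [← heqa]
      have h1 : fc c al = c := hfc_c al hqal hal0 hallt
      have h2 : phiB c al be al = c := by
        unfold phiB phiA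
        rw [hqal]
        ring
      rw [h1, h2]
    rcases eq_or_lt_of_le hrbe with heqb | hltb
    · rw [heqb]
      have h1 : fc c be = c := hfc_c be hqbe (by linarith) (by linarith)
      have h2 : phiB c al be be = c := by
        unfold phiB phiA
        rw [hqbe]
        ring
      rw [h1, h2]
    · have hq : r^2 - r + c < 0 := by
        rw [hfac r]; exact mul_neg_of_pos_of_neg (by linarith) (by linarith)
      have h1r : 0 < 1 - r := by linarith
      have hr0 : 0 < r := by linarith
      have hpos : 0 < r - r^2 - c := by nlinarith
      have hfcr : fc c r = c + (r^2-r+c)*Real.log (r*(1-r)/(r-r^2-c)) := by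
        unfold fc
        rw [if_neg (by linarith), if_pos hq]
      rw [hfcr]
      have hlq : Real.log (r-r^2-c) = Real.log (r-al) + Real.log (be-r) := by
        rw [show r-r^2-c = (r-al)*(be-r) from by linear_combination -(hfac r)]
        exact Real.log_mul (ne_of_gt (by linarith)) (ne_of_gt (by linarith))
      rw [Real.log_div (ne_of_gt (mul_pos hr0 h1r)) (ne_of_gt hpos),
        Real.log_mul (ne_of_gt hr0) (ne_of_gt h1r), hlq]
      unfold phiB phiA
      rw [show al - r = -(r-al) from by ring, Real.log_neg_eq_log]
      linear_combination (-(Real.log (r-al)) - Real.log (be-r)) * hfac r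
  -- piece 3 : EqOn fc phiA on [be, 1-c]
  have heA3 : EqOn (fc c) (phiA c al be) (Icc be (1-c)) := by
    intro r hr
    obtain ⟨hrbe, hrc⟩ := hr
    rcases eq_or_lt_of_le hrbe with heqb | hltb
    · rw [← heqb]
      have h1 : fc c be = c := by
        unfold fc
        rw [if_neg (by linarith), if_neg (by rw [hqbe]; exact lt_irrefl 0), hqbe]
        ring
      have h2 : phiA c al be be = c := by
        unfold phiA
        rw [hqbe]
        ring
      rw [h1, h2]
    rcases eq_or_lt_of_le hrc with heqc | hltc
    · rw [heqc]
      have hfcr : fc c (1-c) = 1 - (1-c) := by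
        unfold fc
        rw [if_pos le_rfl]
      rw [hfcr]
      unfold phiA
      have e7 : al - (1 - c) = -(be^2) := by linear_combination hc_eq + (1+be)*halbe
      have e8 : be - (1 - c) = -(al^2) := by linear_combination hc_eq + (1+al)*halbe
      rw [show (1:ℝ)-(1-c) = c from by ring, e7, e8, Real.log_neg_eq_log,
        Real.log_neg_eq_log, Real.log_pow, Real.log_pow,
        show Real.log c = Real.log al + Real.log be from by
          rw [hc_eq, Real.log_mul (ne_of_gt hal0) (ne_of_gt hbe0)]]
      rw [hc_eq, hbe_eq]
      push_cast
      ring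
    · have hq : 0 < r^2 - r + c := by
        rw [hfac r]; exact mul_pos (by linarith) (by linarith)
      have h1r : 0 < 1 - r := by linarith
      have hfcr : fc c r = c + (r^2-r+c)*Real.log ((1-r)^2/(r^2-r+c)) := by
        unfold fc
        rw [if_neg (by linarith), if_neg (not_lt.mpr hq.le)]
      rw [hfcr]
      have hlq : Real.log (r^2-r+c) = Real.log (r-al) + Real.log (r-be) := by
        rw [show r^2-r+c = (r-al)*(r-be) from hfac r]
        exact Real.log_mul (ne_of_gt (by linarith)) (ne_of_gt (by linarith))
      rw [Real.log_div (pow_ne_zero 2 (ne_of_gt h1r)) (ne_of_gt hq), Real.log_pow, hlq]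
      unfold phiA
      rw [show al - r = -(r-al) from by ring, Real.log_neg_eq_log,
        show be - r = -(r-be) from by ring, Real.log_neg_eq_log]
      push_cast
      linear_combination (-(Real.log (r-al)) - Real.log (r-be)) * hfac r
  -- piece 4
  have heL : EqOn (fc c) (fun r => 1 - r) (Icc (1-c) 1) := by
    intro r hr
    unfold fc
    rw [if_pos hr.1]
  -- integrability of the phi's
  have hiA1 : IntervalIntegrable (phiA c al be) volume 0 al :=
    ContinuousOn.intervalIntegrable (by rw [uIcc_of_le hal0.le]
                                        exact phiA_contOn c al be 0 al (by linarith))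
  have hiB : IntervalIntegrable (phiB c al be) volume al be :=
    ContinuousOn.intervalIntegrable (by rw [uIcc_of_le hab]
                                        exact phiB_contOn c al be al be (by linarith) hal0)
  have hiA3 : IntervalIntegrable (phiA c al be) volume be (1-c) :=
    ContinuousOn.intervalIntegrable (by rw [uIcc_of_le hbelt.le]
                                        exact phiA_contOn c al be be (1-c) h1c1)
  have hiL : IntervalIntegrable (fun r : ℝ => 1 - r) volume (1-c) 1 :=
    ((continuous_const.sub continuous_id).intervalIntegrable _ _)
  -- integrability of fc on pieces
  have hI1 : IntervalIntegrable (fc c) volume 0 al :=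
    intervalIntegrable_congr hal0.le (fun x hx => (heA1 hx).symm) hiA1
  have hI2 : IntervalIntegrable (fc c) volume al be :=
    intervalIntegrable_congr hab (fun x hx => (heB hx).symm) hiB
  have hI3 : IntervalIntegrable (fc c) volume be (1-c) :=
    intervalIntegrable_congr hbelt.le (fun x hx => (heA3 hx).symm) hiA3
  have hI4 : IntervalIntegrable (fc c) volume (1-c) 1 :=
    intervalIntegrable_congr (by linarith) (fun x hx => (heL hx).symm) hiL
  refine ⟨((hI1.trans hI2).trans hI3).trans hI4, ?_⟩
  -- values
  have hV1 : ∫ r in (0:ℝ)..al, fc c r = FA c al be al - FA c al be 0 := by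
    rw [intervalIntegral.integral_congr (by rw [uIcc_of_le hal0.le]; exact heA1)]
    exact intervalIntegral.integral_eq_sub_of_hasDerivAt_of_le hal0.le
      hFAc.continuousOn
      (fun x hx => FA_deriv c al be x hfac (by rcases hx with ⟨_, h⟩; intro he; rw [he] at h; linarith)
        (fun he => by rw [he] at hx; exact lt_irrefl al hx.2)
        (fun he => by rw [he] at hx; exact absurd hx.2 (not_lt.mpr hab)))
      hiA1
  have hV2 : ∫ r in al..be, fc c r = FB c al be be - FB c al be al := by
    rw [intervalIntegral.integral_congr (by rw [uIcc_of_le hab]; exact heB)]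
    exact intervalIntegral.integral_eq_sub_of_hasDerivAt_of_le hab
      hFBc.continuousOn
      (fun x hx => FB_deriv c al be x hfac (by rcases hx with ⟨_, h⟩; intro he; rw [he] at h; linarith)
        (fun he => by rw [he] at hx; exact lt_irrefl al hx.1)
        (fun he => by rw [he] at hx; exact lt_irrefl be hx.2)
        (by rcases hx with ⟨h, _⟩; intro he; rw [he] at h; linarith))
      hiB
  have hV3 : ∫ r in be..(1-c), fc c r = FA c al be (1-c) - FA c al be be := by
    rw [intervalIntegral.integral_congr (by rw [uIcc_of_le hbelt.le]; exact heA3)]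
    exact intervalIntegral.integral_eq_sub_of_hasDerivAt_of_le hbelt.le
      hFAc.continuousOn
      (fun x hx => FA_deriv c al be x hfac (by rcases hx with ⟨_, h⟩; intro he; rw [he] at h; linarith)
        (fun he => by rw [he] at hx; exact absurd hx.1 (not_lt.mpr hab))
        (fun he => by rw [he] at hx; exact lt_irrefl be hx.1))
      hiA3
  have hV4 : ∫ r in (1-c)..1, fc c r = c^2/2 := by
    rw [intervalIntegral.integral_congr (by rw [uIcc_of_le (by linarith : 1-c ≤ (1:ℝ))]; exact heL)]
    have hder : ∀ x ∈ uIcc (1-c) (1:ℝ), HasDerivAt (fun r : ℝ => r - r^2/2) (1 - x) x := by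
      intro x _
      have h := (hasDerivAt_id x).sub ((hasDerivAt_pow 2 x).div_const 2)
      refine h.congr_deriv ?_
      push_cast
      ring
    rw [intervalIntegral.integral_eq_sub_of_hasDerivAt hder hiL]
    ring
  rw [← intervalIntegral.integral_add_adjacent_intervals ((hI1.trans hI2).trans hI3) hI4,
    ← intervalIntegral.integral_add_adjacent_intervals (hI1.trans hI2) hI3,
    ← intervalIntegral.integral_add_adjacent_intervals hI1 hI2,
    hV1, hV2, hV3, hV4]

lemma vol_reduction (c : ℝ) (hc0 : 0 < c) (hc : c ≤ 1/4) :
    (volume (Sset c)).toReal = ∫ r in (0:ℝ)..1, (fc c r + fc c (1-r)) := by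
  rw [MeasureTheory.Measure.volume_eq_prod, Measure.prod_apply (Sset_measurable c)]
  have hGmeas : Measurable (fun r => (volume : Measure (ℝ×ℝ)) (Prod.mk r ⁻¹' Sset c)) :=
    measurable_measure_prodMk_left (Sset_measurable c)
  have hGle : ∀ r : ℝ, (volume : Measure (ℝ×ℝ)) (Prod.mk r ⁻¹' Sset c) ≤ 1 := by
    intro r
    have hsub : Prod.mk r ⁻¹' Sset c ⊆ Icc (0:ℝ) 1 ×ˢ Icc (0:ℝ) 1 := fun q hq => hq.1.2
    calc (volume : Measure (ℝ×ℝ)) (Prod.mk r ⁻¹' Sset c)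
        ≤ volume (Icc (0:ℝ) 1 ×ˢ Icc (0:ℝ) 1) := measure_mono hsub
      _ = 1 := by
          rw [MeasureTheory.Measure.volume_eq_prod, Measure.prod_prod, Real.volume_Icc]
          norm_num
  rw [← integral_toReal hGmeas.aemeasurable
    (ae_of_all _ fun r => lt_of_le_of_lt (hGle r) ENNReal.one_lt_top)]
  have hzero : ∀ r ∉ Icc (0:ℝ) 1, ((volume : Measure (ℝ×ℝ)) (Prod.mk r ⁻¹' Sset c)).toReal = 0 := by
    intro r hr
    have he : Prod.mk r ⁻¹' Sset c = ∅ :=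
      eq_empty_iff_forall_notMem.mpr fun q hq => hr hq.1.1
    rw [he, measure_empty]
    rfl
  rw [← setIntegral_eq_integral_of_forall_compl_eq_zero (fun r hr => hzero r hr),
    integral_Icc_eq_integral_Ioo]
  have hfin : volume ({c, 1-c, (1 - Real.sqrt (1-4*c))/2, (1 + Real.sqrt (1-4*c))/2} : Set ℝ) = 0 :=
    (Set.toFinite _).measure_zero volume
  have hcongr : ∀ᵐ r, r ∈ Ioo (0:ℝ) 1 →
      ((volume : Measure (ℝ×ℝ)) (Prod.mk r ⁻¹' Sset c)).toReal = fc c r + fc c (1-r) := by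
    filter_upwards [measure_eq_zero_iff_ae_notMem.mp hfin] with r hrE hrIoo
    simp only [mem_insert_iff, mem_singleton_iff, not_or] at hrE
    obtain ⟨h1, h2, h3, h4⟩ := hrE
    refine Gr_eq c r hc0 hrIoo ?_ h2 h1
    intro hq0
    have hd2 : (2*r-1)^2 = 1-4*c := by nlinarith
    have habs : |2*r-1| = Real.sqrt (1-4*c) := by
      rw [← hd2, Real.sqrt_sq_eq_abs]
    rcases (abs_eq (Real.sqrt_nonneg _)).mp habs with h | h
    · exact h4 (by linarith)
    · exact h3 (by linarith)
  rw [setIntegral_congr_ae measurableSet_Ioo hcongr, ← integral_Ioc_eq_integral_Ioo,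
    ← intervalIntegral.integral_of_le zero_le_one]


end CdfLeftAux

open CdfLeftAux in
/-- For `0 < c ≤ 1/4`, the volume of
`{(r,s,t) ∈ [0,1]³ : r·s·t + (1−r)·(1−s)·(1−t) ≤ c}` is
`c − (3c − 1/2)·ln c + (1 − 4c)^{3/2}·artanh √(1 − 4c)`. -/
theorem cdf_left (c : ℝ) (hc0 : 0 < c) (hc : c ≤ 1 / 4) :
    (volume {p : ℝ × ℝ × ℝ | p ∈ Set.Icc (0:ℝ) 1 ×ˢ Set.Icc (0:ℝ) 1 ×ˢ Set.Icc (0:ℝ) 1 ∧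
        p.1 * p.2.1 * p.2.2 + (1 - p.1) * (1 - p.2.1) * (1 - p.2.2) ≤ c}).toReal =
      c - (3 * c - 1 / 2) * Real.log c +
        (1 - 4 * c) ^ ((3 : ℝ) / 2) * _root_.artanh (Real.sqrt (1 - 4 * c)) := by
  have hSet : {p : ℝ × ℝ × ℝ | p ∈ Set.Icc (0:ℝ) 1 ×ˢ Set.Icc (0:ℝ) 1 ×ˢ Set.Icc (0:ℝ) 1 ∧
      p.1 * p.2.1 * p.2.2 + (1 - p.1) * (1 - p.2.1) * (1 - p.2.2) ≤ c} = Sset c := rfl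
  rw [hSet, vol_reduction c hc0 hc]
  set d := Real.sqrt (1-4*c) with hdd
  have h14 : (0:ℝ) ≤ 1 - 4*c := by linarith
  have hd2 : d^2 = 1 - 4*c := Real.sq_sqrt h14
  have hd0 : 0 ≤ d := Real.sqrt_nonneg _
  have hd1 : d < 1 := by nlinarith
  set al := (1-d)/2 with hal
  set be := (1+d)/2 with hbe
  obtain ⟨hI, hV⟩ := fc_int c d al be hc0 hc hd0 hd2 hal hbe
  have hI' : IntervalIntegrable (fun r => fc c (1-r)) volume 0 1 := by
    have h := (hI.comp_sub_left 1).symm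
    rw [show (1:ℝ)-0 = 1 from by ring, show (1:ℝ)-1 = 0 from by ring] at h
    exact h
  rw [intervalIntegral.integral_add hI hI',
    intervalIntegral.integral_comp_sub_left (fc c) 1,
    show (1:ℝ)-1 = 0 from by ring, show (1:ℝ)-0 = 1 from by ring]
  have h2V : (∫ r in (0:ℝ)..1, fc c r) + ∫ r in (0:ℝ)..1, fc c r =
      2*((FA c al be al - FA c al be 0) + (FB c al be be - FB c al be al)
      + (FA c al be (1-c) - FA c al be be) + c^2/2) := by
    rw [hV]; ring
  rw [h2V, final_algebra c d al be hc0 hd0 hd2 hal hbe]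
  -- bridge to artanh / rpow
  congr 1
  have hal0 : 0 < al := by rw [hal]; linarith
  have hbe0 : 0 < be := by rw [hbe]; linarith
  have hba : be/al = (1+d)/(1-d) := by
    have hne : (1:ℝ) - d ≠ 0 := by linarith
    rw [hal, hbe]
    field_simp
  have hart : _root_.artanh d = (1/2) * (Real.log be - Real.log al) := by
    unfold _root_.artanh
    rw [← hba, Real.log_div (ne_of_gt hbe0) (ne_of_gt hal0)]
  rw [hart]
  rcases eq_or_lt_of_le h14 with h0 | hpos
  · rw [← h0, Real.zero_rpow (by norm_num)]
    ring
  · rw [show (3:ℝ)/2 = 1 + 1/2 from by norm_num, Real.rpow_add hpos, Real.rpow_one,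
      ← Real.sqrt_eq_rpow, ← hdd]
    try ring
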